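/- Let P be an (s,k)-puzzle that is a strong uniquely solvable puzzle. Then there exists an (s!, s·k)-puzzle that is a local strong uniquely solvable puzzle. -/
import Mathlib


/-- Exactly two of the three propositions hold. -/
def ExactlyTwo (A B C : Prop) : Prop :=
  (A ∧ B ∧ ¬C) ∨ (A ∧ ¬B ∧ C) ∨ (¬A ∧ B ∧ C)

/-- At least two of the three propositions hold. -/
def AtLeastTwo (A B C : Prop) : Prop :=
  (A ∧ B) ∨ (A ∧ C) ∨ (B ∧ C)

/-- A puzzle of width `k` is a finite set of rows in `{1,2,3}^k`; we use the
alphabet `Fin 3` whose three elements are denoted `1`, `2`, `3` (`3 = 0`).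
`P` is a strong uniquely solvable puzzle (strong USP). -/
def IsSUSP {k : ℕ} (P : Finset (Fin k → Fin 3)) : Prop :=
  ∀ π₁ π₂ π₃ : Equiv.Perm {r // r ∈ P},
    (π₁ = π₂ ∧ π₂ = π₃) ∨
    ∃ (r : {r // r ∈ P}) (c : Fin k),
      ExactlyTwo ((π₁ r).1 c = 1) ((π₂ r).1 c = 2) ((π₃ r).1 c = 3)

/-- `P` is a local strong uniquely solvable puzzle. -/
def IsLocalSUSP {k : ℕ} (P : Finset (Fin k → Fin 3)) : Prop :=
  ∀ u ∈ P, ∀ v ∈ P, ∀ w ∈ P, ¬(u = v ∧ v = w) →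
    ∃ c : Fin k, (u c, v c, w c) ∈
      ({(1, 2, 1), (1, 2, 2), (1, 1, 3), (1, 3, 3), (2, 2, 3), (3, 2, 3)} :
        Set (Fin 3 × Fin 3 × Fin 3))

/-- Every `(s,k)` strong USP yields an `(s!, s·k)` local strong USP. -/
theorem susp_to_local_susp {k : ℕ} (P : Finset (Fin k → Fin 3))
    (hP : IsSUSP P) :
    ∃ P' : Finset (Fin (P.card * k) → Fin 3),
      P'.card = Nat.factorial P.card ∧ IsLocalSUSP P' := by

  let e : {r // r ∈ P} ≃ Fin P.card := P.equivFin
  let ι : Fin P.card × Fin k ≃ Fin (P.card * k) := finProdFinEquiv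
  let f : Equiv.Perm {r // r ∈ P} → (Fin (P.card * k) → Fin 3) :=
    fun π i => (π (e.symm (ι.symm i).1)).1 (ι.symm i).2
  have key : ∀ (π : Equiv.Perm {r // r ∈ P}) (r : {r // r ∈ P}) (c : Fin k),
      f π (ι (e r, c)) = (π r).1 c := by
    intro π r c
    simp [f]
  have hfinj : Function.Injective f := by
    intro π₁ π₂ h
    refine Equiv.ext fun r => Subtype.ext (funext fun c => ?_)
    have := congrFun h (ι (e r, c))
    rwa [key, key] at this
  refine ⟨Finset.image f Finset.univ, ?_, ?_⟩
  · rw [Finset.card_image_of_injective _ hfinj, Finset.card_univ,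
      Fintype.card_perm, Fintype.card_coe]
  · intro u hu v hv w hw hne
    obtain ⟨π₁, -, rfl⟩ := Finset.mem_image.mp hu
    obtain ⟨π₂, -, rfl⟩ := Finset.mem_image.mp hv
    obtain ⟨π₃, -, rfl⟩ := Finset.mem_image.mp hw
    rcases hP π₁ π₂ π₃ with ⟨h12, h23⟩ | ⟨r, c, hrc⟩
    · exact absurd ⟨by rw [h12], by rw [h23]⟩ hne
    · refine ⟨ι (e r, c), ?_⟩
      rw [key, key, key]
      simp only [Set.mem_insert_iff, Set.mem_singleton_iff, Prod.mk.injEq]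
      revert hrc
      generalize (π₁ r).1 c = a
      generalize (π₂ r).1 c = b
      generalize (π₃ r).1 c = d
      revert a b d
      unfold ExactlyTwo
      decide
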